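/- arXiv:2311.16686 — 7 statements merged into one kernel-verified Lean document; each statement's English description precedes it below -/
import Mathlib

section
/- For the SEIR model with all parameters β, s, γ_e, γ_i, μ, δ > 0, set d_e = γ_e + μ, d_i = γ_i + μ + δ and R₀ = β·s·γ_e/(d_e·d_i), and assume R₀ ≥ 1. Then the pair q_i = 1/R₀ and q_e = μ/d_e + (γ_e/d_e)·(1/R₀) satisfies the branching-process extinction fixed-point equations: q_e·d_e = μ + γ_e·q_i and q_i·(β·s + d_i) = β·s·q_i·q_e + d_i. -/
/-- For the SEIR model with `R₀ = β s γ_e/(d_e d_i) ≥ 1`, the pair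
`q_i = 1/R₀`, `q_e = μ/d_e + (γ_e/d_e)·(1/R₀)` satisfies the branching-process
extinction fixed-point equations. -/
theorem seir_extinction_prob (β s γe γi μ δ : ℝ)
    (hβ : 0 < β) (hs : 0 < s) (hγe : 0 < γe) (hγi : 0 < γi) (hμ : 0 < μ) (hδ : 0 < δ) :
    let de := γe + μ
    let di := γi + μ + δ
    let R₀ := β * s * γe / (de * di)
    let qi := 1 / R₀
    let qe := μ / de + (γe / de) * (1 / R₀)
    1 ≤ R₀ →
      qe * de = μ + γe * qi ∧ qi * (β * s + di) = β * s * qi * qe + di := by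
  intro de di R₀ qi qe hR
  have hde : de ≠ 0 := by positivity
  have hdi : di ≠ 0 := by positivity
  have hR₀ : R₀ ≠ 0 := by
    have : (0:ℝ) < R₀ := lt_of_lt_of_le one_pos hR |>.trans_le' (by norm_num)
    linarith
  constructor
  · show (μ / de + (γe / de) * (1 / R₀)) * de = μ + γe * (1 / R₀)
    field_simp
  · show (1 / R₀) * (β * s + di) = β * s * (1 / R₀) * (μ / de + (γe / de) * (1 / R₀)) + di
    have hRdef : R₀ = β * s * γe / (de * di) := rfl
    rw [hRdef]
    field_simp
    ring
end

section
/- For the SEIARW model, let all parameters s, β_i, β_a, β_w, d_e, d_i, d_a, d_w, e_i, e_a, ε_i, ε_a be positive, and consider the 4 × 4 real matrices F with first row (0, s·β_i, s·β_a, s·β_w) and all other rows zero, and V = [[d_e, 0, 0, 0], [−e_i, d_i, 0, 0], [−e_a, 0, d_a, 0], [0, −ε_i, −ε_a, d_w]]. Then the characteristic polynomial of K = F·V⁻¹ equals X³·(X − R₀), where R₀ = (s/d_e)·( β_i·e_i/d_i + β_a·e_a/d_a + (β_w/d_w)·(ε_i·e_i/d_i + ε_a·e_a/d_a) ); in particular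 R₀ is the unique nonzero eigenvalue of K. -/
set_option maxHeartbeats 1600000


open Polynomial Matrix

/-- For the SEIARW model, the characteristic polynomial of the next generation matrix
`K = F * V⁻¹` equals `X³ (X - R₀)`, where
`R₀ = (s/d_e)(β_i e_i/d_i + β_a e_a/d_a + (β_w/d_w)(ε_i e_i/d_i + ε_a e_a/d_a))`;
in particular `R₀` is the unique nonzero eigenvalue of `K`. -/
theorem seiarw_ngm_charpoly (s βi βa βw de di da dw ei ea εi εa : ℝ)
    (hs : 0 < s) (hβi : 0 < βi) (hβa : 0 < βa) (hβw : 0 < βw)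
    (hde : 0 < de) (hdi : 0 < di) (hda : 0 < da) (hdw : 0 < dw)
    (hei : 0 < ei) (hea : 0 < ea) (hεi : 0 < εi) (hεa : 0 < εa) :
    let F : Matrix (Fin 4) (Fin 4) ℝ :=
      !![0, s * βi, s * βa, s * βw;
         0, 0, 0, 0;
         0, 0, 0, 0;
         0, 0, 0, 0]
    let V : Matrix (Fin 4) (Fin 4) ℝ :=
      !![de, 0, 0, 0;
         -ei, di, 0, 0;
         -ea, 0, da, 0;
         0, -εi, -εa, dw]
    let K : Matrix (Fin 4) (Fin 4) ℝ := F * V⁻¹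
    let R₀ := (s / de) * (βi * ei / di + βa * ea / da + (βw / dw) * (εi * ei / di + εa * ea / da))
    K.charpoly = X ^ 3 * (X - C R₀) := by
  intro F V K R₀
  have hde' := hde.ne'
  have hdi' := hdi.ne'
  have hda' := hda.ne'
  have hdw' := hdw.ne'
  set W : Matrix (Fin 4) (Fin 4) ℝ :=
    !![1/de, 0, 0, 0;
       ei/(de*di), 1/di, 0, 0;
       ea/(de*da), 0, 1/da, 0;
       (εi*ei/di + εa*ea/da)/(de*dw), εi/(di*dw), εa/(da*dw), 1/dw] with hW
  have hVW : V * W = 1 := by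
    ext i j
    fin_cases i <;> fin_cases j <;>
      simp [V, hW, Matrix.mul_apply, Fin.sum_univ_four, Matrix.one_apply] <;>
      field_simp <;> ring
  have hVinv : V⁻¹ = W := Matrix.inv_eq_right_inv hVW
  have hK : K = !![R₀, s*βi/di + s*βw*εi/(di*dw), s*βa/da + s*βw*εa/(da*dw), s*βw/dw;
                   0, 0, 0, 0; 0, 0, 0, 0; 0, 0, 0, 0] := by
    show F * V⁻¹ = _
    rw [hVinv]
    ext i j
    fin_cases i <;> fin_cases j <;>
      simp [F, hW, R₀, Matrix.mul_apply, Fin.sum_univ_four, Matrix.vecHead, Matrix.vecTail] <;>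
      field_simp <;> ring
  rw [hK, Matrix.charpoly]
  have hc : charmatrix (!![R₀, s*βi/di + s*βw*εi/(di*dw), s*βa/da + s*βw*εa/(da*dw), s*βw/dw;
        0, 0, 0, 0; 0, 0, 0, 0; 0, 0, 0, 0] : Matrix (Fin 4) (Fin 4) ℝ) =
      !![X - C R₀, -C (s*βi/di + s*βw*εi/(di*dw)), -C (s*βa/da + s*βw*εa/(da*dw)), -C (s*βw/dw);
         0, X, 0, 0; 0, 0, X, 0; 0, 0, 0, X] := by
    ext i j
    fin_cases i <;> fin_cases j <;>
      simp [charmatrix_apply, Matrix.one_apply, Matrix.vecHead, Matrix.vecTail]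
  rw [hc]
  simp [Matrix.det_succ_row_zero, Fin.sum_univ_succ, Matrix.vecHead, Matrix.vecTail,
    Matrix.submatrix_apply, Fin.succAbove]
  ring
end

section
/- Let all parameters β, β_{xy}, β_{xv}, b, μ_y, μ_v be positive and x > 0, set x_c = μ_y/β_{xy}, R₀ = x/x_c + b·β·x/(μ_v + β_{xv}·x) and R₀' = (x/(2·x_c))·(1 + √(1 + 4·β·b·x_c²/(x·(x·β_{xv} + μ_v)))). Then R₀' < 1 if and only if R₀ < 1. -/
/-- The two basic reproduction numbers `R₀` and `R₀'` arising from the two admissible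
`(F,V)` decompositions of the virus–tumor model of Lee et al. determine the same
stability domain: `R₀' < 1 ↔ R₀ < 1`. -/
theorem lee_two_R0_same_stability (β βxy βxv b μy μv x : ℝ)
    (hβ : 0 < β) (hβxy : 0 < βxy) (hβxv : 0 < βxv) (hb : 0 < b)
    (hμy : 0 < μy) (hμv : 0 < μv) (hx : 0 < x) :
    let xc := μy / βxy
    let R₀ := x / xc + b * β * x / (μv + βxv * x)
    let R₀' := (x / (2 * xc)) * (1 + Real.sqrt (1 + 4 * β * b * xc ^ 2 / (x * (x * βxv + μv))))
    (R₀' < 1 ↔ R₀ < 1) := by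
  intro xc R₀ R₀'
  have hxc : 0 < xc := div_pos hμy hβxy
  have hD : 0 < μv + βxv * x := by positivity
  set c : ℝ := 4 * β * b * xc ^ 2 / (x * (x * βxv + μv)) with hc
  have hcpos : 0 < c := by
    apply div_pos (by positivity)
    nlinarith
  set s : ℝ := Real.sqrt (1 + c) with hs
  have hs1 : 1 < s := by
    nlinarith [Real.sq_sqrt (show (0:ℝ) ≤ 1 + c by linarith), Real.sqrt_nonneg (1 + c)]
  have hssq : s ^ 2 = 1 + c := Real.sq_sqrt (by linarith)
  set A : ℝ := x / xc with hA
  set P : ℝ := b * β * x / (μv + βxv * x) with hP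
  have hApos : 0 < A := div_pos hx hxc
  have hPpos : 0 < P := div_pos (by positivity) hD
  have hkey : c * A ^ 2 = 4 * P := by
    rw [hc, hA, hP]
    field_simp
    ring
  have hR0 : R₀ = A + P := rfl
  have hR0' : R₀' = (A * (1 + s)) / 2 := by
    show (x / (2 * xc)) * (1 + s) = (A * (1 + s)) / 2
    rw [hA]; ring
  rw [hR0, hR0']
  clear hR0 hR0' hc hs hA hP
  clear_value c s A P
  clear_value R₀ R₀'
  clear R₀ R₀'
  constructor
  · intro h
    have hAs : A * s < 2 - A := by nlinarith
    have hsq : (A * s) ^ 2 < (2 - A) ^ 2 := by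
      have h1 : 0 ≤ A * s := by positivity
      nlinarith
    nlinarith
  · intro h
    have h1 : A < 1 := by linarith
    have hsq : (A * s) ^ 2 < (2 - A) ^ 2 := by nlinarith
    have hAs : A * s < 2 - A := by nlinarith [mul_pos hApos (lt_trans one_pos hs1)]
    nlinarith
end

section
/- For the two-strain SIS model with d_1 = σ_1 + b and d_2 = σ_2 + b, suppose ν_1 ≠ ν_2 and β_1 − β_2 + ν_1 − ν_2 ≠ 0, and define i_1 = (β_1·d_2 − β_2·d_1 − (ν_1 − ν_2)·(β_2 − d_2))/((ν_1 − ν_2)·(β_1 − β_2 + ν_1 − ν_2)), i_2 = (d_1·(β_2 − ν_1 + ν_2) − β_1·(d_2 − ν_1 + ν_2))/((ν_1 − ν_2)·(β_1 − β_2 + ν_1 − ν_2)), and s = 1 − i_1 − i_2. Then i_2·(ν_2 − ν_1) + β_1·s = d_1 and i_1·(ν_1 − ν_2) + β_2·s = d_2; in particular (i_1, i_2, s) is a coexistence equilibrium of the two-strain SIS system. -/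
/-- For the two-strain SIS model with `d₁ = σ₁ + b`, `d₂ = σ₂ + b`, the explicit point
given by the displayed formulas satisfies `i₂(ν₂ − ν₁) + β₁ s = d₁` and
`i₁(ν₁ − ν₂) + β₂ s = d₂`, hence is a coexistence equilibrium. -/
theorem two_strain_sis_coexistence_equilibrium (b σ1 σ2 β1 β2 ν1 ν2 : ℝ)
    (hν : ν1 ≠ ν2) (hden : β1 - β2 + ν1 - ν2 ≠ 0) :
    let d1 := σ1 + b
    let d2 := σ2 + b
    let i1 := (β1 * d2 - β2 * d1 - (ν1 - ν2) * (β2 - d2)) /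
      ((ν1 - ν2) * (β1 - β2 + ν1 - ν2))
    let i2 := (d1 * (β2 - ν1 + ν2) - β1 * (d2 - ν1 + ν2)) /
      ((ν1 - ν2) * (β1 - β2 + ν1 - ν2))
    let s := 1 - i1 - i2
    i2 * (ν2 - ν1) + β1 * s = d1 ∧ i1 * (ν1 - ν2) + β2 * s = d2 := by
  have hsub : ν1 - ν2 ≠ 0 := sub_ne_zero.mpr hν
  intro d1 d2 i1 i2 s
  constructor <;> · show _ = _; simp only [s, i1, i2, d1, d2]; field_simp; ring
end

section
/- For the two-strain SIS model with ν_1 = 0, ν_2 = ν, parameters b, σ_1, σ_2, β_1, β_2 > 0, ν ≥ 0, R₁ = β_1/(b + σ_1), R₂ = β_2/(b + σ_2), consider the 3 × 3 real matrix J = [[ν − (b + σ_1) + (β_1 − ν)·(b + σ_2)/β_2, 0, 0], [ν·(b + σ_2 − β_2)/β_2, 0, β_2 − b − σ_2], [σ_1 − β_1·(b + σ_2)/β_2, −b, σ_2 − β_2]] (the Jacobian at the strain-2 dominance equilibrium x₂). Then the characteristic polynomial of J equals (X + b)·(X + (b + σ_2)·(R₂ − 1))·(X − c) with c = ν − (b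 + σ_1) + (β_1 − ν)·(b + σ_2)/β_2, so the eigenvalues of J are −b, −(R₂ − 1)·(b + σ_2), and c; moreover c < 0 if and only if R₁₂ := R₁/R₂ + (ν/(b + σ_1))·(1 − 1/R₂) < 1. -/
open Polynomial Matrix

/-- For the two-strain SIS model with `ν₁ = 0`, `ν₂ = ν`, the characteristic polynomial
of the Jacobian at the strain-2 dominance equilibrium factors as
`(X + b)(X + (b + σ₂)(R₂ − 1))(X − c)`, so the eigenvalues are `−b`,
`−(R₂ − 1)(b + σ₂)` and `c`; moreover `c < 0` iff the invasion number
`R₁₂ = R₁/R₂ + (ν/(b + σ₁))(1 − 1/R₂)` is below 1. -/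
theorem two_strain_sis_invasion_jacobian (b σ1 σ2 β1 β2 ν : ℝ)
    (hb : 0 < b) (hσ1 : 0 < σ1) (hσ2 : 0 < σ2) (hβ1 : 0 < β1) (hβ2 : 0 < β2)
    (hν : 0 ≤ ν) :
    let R1 := β1 / (b + σ1)
    let R2 := β2 / (b + σ2)
    let c := ν - (b + σ1) + (β1 - ν) * (b + σ2) / β2
    let J : Matrix (Fin 3) (Fin 3) ℝ :=
      !![c, 0, 0;
         ν * (b + σ2 - β2) / β2, 0, β2 - b - σ2;
         σ1 - β1 * (b + σ2) / β2, -b, σ2 - β2]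
    let R12 := R1 / R2 + (ν / (b + σ1)) * (1 - 1 / R2)
    J.charpoly = (X + C b) * (X + C ((b + σ2) * (R2 - 1))) * (X - C c) ∧
      (c < 0 ↔ R12 < 1) := by
  intro R1 R2 c J R12
  have hbs2 : b + σ2 ≠ 0 := by positivity
  have hbs1 : (0:ℝ) < b + σ1 := by positivity
  have hβ2' : β2 ≠ 0 := ne_of_gt hβ2
  have hR2 : (b + σ2) * (R2 - 1) = β2 - b - σ2 := by
    show (b + σ2) * (β2 / (b + σ2) - 1) = β2 - b - σ2
    field_simp
    ring
  constructor
  · rw [hR2]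
    rw [Matrix.charpoly, Matrix.det_fin_three]
    simp [charmatrix_apply, J, map_sub, map_add, map_neg]
    ring
  · have hkey : R12 = c / (b + σ1) + 1 := by
      show β1 / (b + σ1) / (β2 / (b + σ2)) + (ν / (b + σ1)) * (1 - 1 / (β2 / (b + σ2)))
          = (ν - (b + σ1) + (β1 - ν) * (b + σ2) / β2) / (b + σ1) + 1
      field_simp
      ring
    constructor
    · intro hc
      rw [hkey]
      nlinarith [div_neg_of_neg_of_pos hc hbs1]
    · intro h
      rw [hkey] at h
      have : c / (b + σ1) < 0 := by linarith
      have h2 := mul_neg_of_neg_of_pos this hbs1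
      rwa [div_mul_cancel₀ c (ne_of_gt hbs1)] at h2
end

section
/- In the two-strain dengue model with vaccination of Bulh et al., assume μ, γ_2, β_2, θ_v, α_v > 0 and 0 ≤ ξ ≤ 1, set v = ξ·μ/(θ_v + μ), R₂ = (β_2/(γ_2 + μ))·(1 − ξ + ξ·α_v·θ_v/(θ_v + μ)), and consider the quadratic a·x² + b·x + c with a = α_v, b = μ·α_v·(1 − β_2·(1 − ξ)/(γ_2 + μ)) + μ·(1 − β_2·α_v·θ_v·v/((γ_2 + μ)·(θ_v + μ))), c = μ²·(1 − R₂). Then: (i) if R₂ ≤ 1, the quadratic has no root with positive real part (indeed b > 0 and c ≥ 0); (ii) if R₂ > 1, the quadratic has exactly one positive real root. -/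
/-- In the two-strain dengue model with vaccination, the quadratic
`a x² + b x + c` determining the strain-2 force of infection at the endemic point `E₂`
has (i) no root with positive real part when `R₂ ≤ 1` (indeed `b > 0` and `c ≥ 0`),
and (ii) exactly one positive real root when `R₂ > 1`. -/
theorem dengue_vacc_endemic_quadratic (μ γ2 β2 θv αv ξ : ℝ)
    (hμ : 0 < μ) (hγ2 : 0 < γ2) (hβ2 : 0 < β2) (hθv : 0 < θv) (hαv : 0 < αv)
    (hξ0 : 0 ≤ ξ) (hξ1 : ξ ≤ 1) :
    let v : ℝ := ξ * μ / (θv + μ)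
    let R2 : ℝ := (β2 / (γ2 + μ)) * (1 - ξ + ξ * αv * θv / (θv + μ))
    let a : ℝ := αv
    let b : ℝ := μ * αv * (1 - β2 * (1 - ξ) / (γ2 + μ)) +
      μ * (1 - β2 * αv * θv * v / ((γ2 + μ) * (θv + μ)))
    let c : ℝ := μ ^ 2 * (1 - R2)
    (R2 ≤ 1 → 0 < b ∧ 0 ≤ c ∧
        ∀ z : ℂ, (a : ℂ) * z ^ 2 + (b : ℂ) * z + (c : ℂ) = 0 → z.re ≤ 0) ∧
      (1 < R2 → ∃! x : ℝ, 0 < x ∧ a * x ^ 2 + b * x + c = 0) := by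
  intro v R2 a b c
  have hA : 0 < γ2 + μ := by linarith
  have hT : 0 < θv + μ := by linarith
  have ha : (0:ℝ) < a := hαv
  constructor
  · intro hR2
    have hR2' : (β2 / (γ2 + μ)) * (1 - ξ + ξ * αv * θv / (θv + μ)) ≤ 1 := hR2
    have hb : 0 < b := by
      unfold b v
      -- first term nonneg, second term positive
      have h1 : β2 * (1 - ξ) / (γ2 + μ) ≤ 1 := by
        have hnn : 0 ≤ ξ * αv * θv / (θv + μ) := by positivity
        have : (β2 / (γ2 + μ)) * (1 - ξ) ≤ 1 := by nlinarith [div_pos hβ2 hA]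
        calc β2 * (1 - ξ) / (γ2 + μ) = (β2 / (γ2 + μ)) * (1 - ξ) := by ring
          _ ≤ 1 := this
      have h2 : β2 * αv * θv * ξ / ((γ2 + μ) * (θv + μ)) ≤ 1 := by
        have : (β2 / (γ2 + μ)) * (ξ * αv * θv / (θv + μ)) ≤ 1 := by
          nlinarith [div_pos hβ2 hA, mul_nonneg hξ0 (le_of_lt hβ2)]
        calc β2 * αv * θv * ξ / ((γ2 + μ) * (θv + μ))
            = (β2 / (γ2 + μ)) * (ξ * αv * θv / (θv + μ)) := by field_simp
          _ ≤ 1 := this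
      have h3 : μ / (θv + μ) < 1 := by
        rw [div_lt_one hT]; linarith
      have key : β2 * αv * θv * (ξ * μ / (θv + μ)) / ((γ2 + μ) * (θv + μ)) < 1 := by
        have heq : β2 * αv * θv * (ξ * μ / (θv + μ)) / ((γ2 + μ) * (θv + μ))
            = (β2 * αv * θv * ξ / ((γ2 + μ) * (θv + μ))) * (μ / (θv + μ)) := by
          field_simp
        rw [heq]
        have hnn : 0 ≤ β2 * αv * θv * ξ / ((γ2 + μ) * (θv + μ)) := by positivity
        have hnn2 : 0 ≤ μ / (θv + μ) := by positivity
        nlinarith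
      nlinarith [mul_nonneg hμ.le (sub_nonneg.mpr h1), mul_pos hμ (sub_pos.mpr key)]
    have hc : 0 ≤ c := by
      unfold c
      nlinarith [sq_nonneg μ]
    clear_value v R2 a b c
    refine ⟨hb, hc, ?_⟩
    intro z hz
    by_contra hre
    push_neg at hre
    have h1 := congrArg Complex.re hz
    have h2 := congrArg Complex.im hz
    simp [pow_two, Complex.add_re, Complex.add_im, Complex.mul_re, Complex.mul_im,
      Complex.ofReal_re, Complex.ofReal_im] at h1 h2
    have hfac : z.im * (2 * a * z.re + b) = 0 := by linear_combination h2
    rcases mul_eq_zero.mp hfac with hy0 | hbad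
    · rw [hy0] at h1
      simp at h1
      nlinarith [mul_pos ha (mul_pos hre hre), mul_pos hb hre]
    · nlinarith [mul_pos ha hre]
  · intro hR2
    have hc : c < 0 := by
      unfold c
      nlinarith [sq_nonneg μ, mul_pos hμ hμ]
    clear_value v R2 a b c
    set D : ℝ := b ^ 2 - 4 * a * c with hD
    have hDpos : 0 < D := by nlinarith [sq_nonneg b, mul_pos ha (neg_pos.mpr hc)]
    set s : ℝ := Real.sqrt D with hsdef
    have hs0 : 0 ≤ s := Real.sqrt_nonneg D
    have hs2 : s ^ 2 = D := Real.sq_sqrt hDpos.le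
    set x0 : ℝ := (s - b) / (2 * a) with hx0def
    have hx0pos : 0 < x0 := by
      apply div_pos _ (by linarith)
      nlinarith
    have heq : a * x0 ^ 2 + b * x0 + c = 0 := by
      have ha' : a ≠ 0 := ne_of_gt ha
      rw [hx0def]
      field_simp
      linear_combination hs2
    refine ⟨x0, ⟨hx0pos, heq⟩, ?_⟩
    rintro y ⟨hypos, hyeq⟩
    have hfac : (y - x0) * (a * (y + x0) + b) = 0 := by linear_combination hyeq - heq
    rcases mul_eq_zero.mp hfac with h | h
    · linarith [sub_eq_zero.mp h]
    · exfalso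
      have hcy : c = a * (x0 * y) := by linear_combination heq - x0 * h
      nlinarith [mul_pos hx0pos hypos, mul_pos ha (mul_pos hx0pos hypos)]
end

section
/- In the two-strain dengue model with vaccination, let γ_1, γ_2, μ, β_1, β_2, α_v > 0 and s, z ≥ 0, and consider the 4 × 4 matrices (in compartment order I_1, I_2, Y_2, Y_1) F = [[β_1·s, 0, 0, β_1·s], [0, β_2·s, β_2·s, 0], [0, β_2·z·α_v, β_2·z·α_v, 0], [0, 0, 0, 0]] and V = diag(γ_1 + μ, γ_2 + μ, γ_2 + μ, γ_1 + μ). Then the characteristic polynomial of K = F·V⁻¹ equals X²·(X − β_1·s/(γ_1 + μ))·(X − β_2·(z·α_v + s)/(γ_2 + μ)); in particular the nonzero eigenvalues of K are β_1·s/(γ_1 + μ) and β_2·(z·α_v + s)/(γ_2 + μ). -/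
open Polynomial Matrix

lemma aux_charpoly (a b c : ℝ) :
    (!![a,0,0,a;0,b,b,0;0,c,c,0;0,0,0,0] : Matrix (Fin 4) (Fin 4) ℝ).charpoly
      = X ^ 2 * (X - C a) * (X - C (b + c)) := by
  rw [Matrix.charpoly]
  simp [Matrix.charmatrix_apply, Matrix.det_succ_row_zero, Fin.sum_univ_succ,
    Matrix.one_apply, Fin.succ_ne_zero, Matrix.diagonal_apply]
  ring

/-- In the two-strain dengue model with vaccination (compartments I₁, I₂, Y₂, Y₁),
the characteristic polynomial of the next generation matrix `K = F * V⁻¹` equals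
`X² (X − β₁ s/(γ₁+μ)) (X − β₂(z α_v + s)/(γ₂+μ))`; in particular these two quantities
are the nonzero eigenvalues of `K`. -/
theorem dengue_vacc_ngm_charpoly (γ1 γ2 μ β1 β2 αv s z : ℝ)
    (hγ1 : 0 < γ1) (hγ2 : 0 < γ2) (hμ : 0 < μ) (hβ1 : 0 < β1) (hβ2 : 0 < β2)
    (hαv : 0 < αv) (hs : 0 ≤ s) (hz : 0 ≤ z) :
    let F : Matrix (Fin 4) (Fin 4) ℝ :=
      !![β1 * s, 0, 0, β1 * s;
         0, β2 * s, β2 * s, 0;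
         0, β2 * z * αv, β2 * z * αv, 0;
         0, 0, 0, 0]
    let V : Matrix (Fin 4) (Fin 4) ℝ :=
      !![γ1 + μ, 0, 0, 0;
         0, γ2 + μ, 0, 0;
         0, 0, γ2 + μ, 0;
         0, 0, 0, γ1 + μ]
    let K : Matrix (Fin 4) (Fin 4) ℝ := F * V⁻¹
    K.charpoly = X ^ 2 * (X - C (β1 * s / (γ1 + μ))) * (X - C (β2 * (z * αv + s) / (γ2 + μ))) := by
  intro F V K
  have h1 : γ1 + μ ≠ 0 := by positivity
  have h2 : γ2 + μ ≠ 0 := by positivity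
  have hV : V⁻¹ = !![(γ1+μ)⁻¹, 0, 0, 0; 0, (γ2+μ)⁻¹, 0, 0;
      0, 0, (γ2+μ)⁻¹, 0; 0, 0, 0, (γ1+μ)⁻¹] := by
    apply Matrix.inv_eq_right_inv
    show V * _ = 1
    ext i j
    fin_cases i <;> fin_cases j <;>
      simp [V, Matrix.mul_apply, Fin.sum_univ_succ, Matrix.one_apply, mul_inv_cancel₀ h1,
        mul_inv_cancel₀ h2]
  have hK : K = !![β1 * s / (γ1+μ), 0, 0, β1 * s / (γ1+μ);
      0, β2 * s / (γ2+μ), β2 * s / (γ2+μ), 0;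
      0, β2 * z * αv / (γ2+μ), β2 * z * αv / (γ2+μ), 0;
      0, 0, 0, 0] := by
    show F * V⁻¹ = _
    rw [hV]
    ext i j
    fin_cases i <;> fin_cases j <;>
      simp [F, Matrix.mul_apply, Fin.sum_univ_succ, div_eq_mul_inv, Matrix.vecHead, Matrix.vecTail]
  rw [hK, aux_charpoly]
  congr 2
  field_simp
  ring
end
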